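/- If G is a bipartite graph whose number of isolated vertices is not 1, then α(G) > |V(G)|/2 if and only if |core(G)| ≥ 2. -/
import Mathlib


open Finset

variable {V : Type*} [Fintype V] [DecidableEq V]

/-  A set of vertices is stable (independent) if no two of its vertices are adjacent. -/
def stable (G : SimpleGraph V) (S : Finset V) : Prop :=
  ∀ a ∈ S, ∀ b ∈ S, ¬ G.Adj a b

/-  The (open) neighborhood of a set of vertices. -/
open Classical in
noncomputable def nbhd (G : SimpleGraph V) (A : Finset V) : Finset V :=
  Finset.univ.filter fun v => ∃ a ∈ A, G.Adj a v

/-  The stability number: maximum size of a stable set. -/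
open Classical in
noncomputable def alpha (G : SimpleGraph V) : ℕ :=
  Finset.univ.sup fun S : Finset V => if stable G S then S.card else 0

/-  A maximum stable set. -/
def maxStable (G : SimpleGraph V) (S : Finset V) : Prop :=
  stable G S ∧ S.card = alpha G

/-  core(G): the intersection of all maximum stable sets. -/
open Classical in
noncomputable def core (G : SimpleGraph V) : Finset V :=
  Finset.univ.filter fun v => ∀ S : Finset V, maxStable G S → v ∈ S

/-  A vertex is isolated if it has no neighbors. -/
def isolated (G : SimpleGraph V) (v : V) : Prop := ∀ w, ¬ G.Adj v w

/-  The set of isolated vertices. -/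
open Classical in
noncomputable def isol (G : SimpleGraph V) : Finset V :=
  Finset.univ.filter fun v => isolated G v

/-  For a bipartite graph G with |isol(G)| ≠ 1:
α(G) > |V(G)|/2 if and only if |core(G)| ≥ 2. -/
section Aux

variable {G : SimpleGraph V}

lemma mem_nbhd' {X : Finset V} {v : V} : v ∈ nbhd G X ↔ ∃ a ∈ X, G.Adj a v := by
  classical
  simp [nbhd]

lemma stable_card_le {S : Finset V} (h : stable G S) : S.card ≤ alpha G := by
  classical
  have h2 := Finset.le_sup (f := fun S : Finset V => if stable G S then S.card else 0)
    (Finset.mem_univ S)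
  have h3 : (if stable G S then S.card else 0) ≤ alpha G := h2
  rwa [if_pos h] at h3

lemma exists_maxStable (G : SimpleGraph V) : ∃ S, maxStable G S := by
  classical
  obtain ⟨S, -, hS⟩ := Finset.exists_mem_eq_sup Finset.univ ⟨∅, Finset.mem_univ ∅⟩
    (fun S : Finset V => if stable G S then S.card else 0)
  have hS' : alpha G = if stable G S then S.card else 0 := hS
  by_cases hst : stable G S
  · rw [if_pos hst] at hS'
    exact ⟨S, hst, hS'.symm⟩
  · refine ⟨∅, fun a ha => absurd ha (Finset.notMem_empty a), ?_⟩
    rw [if_neg hst] at hS'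
    simp [hS']

lemma isol_subset_core : isol G ⊆ core G := by
  classical
  intro v hv
  rw [isol, Finset.mem_filter] at hv
  rw [core, Finset.mem_filter]
  refine ⟨Finset.mem_univ v, fun S hS => ?_⟩
  by_contra hvS
  have hstable : stable G (insert v S) := by
    intro a ha b hb hab
    rcases Finset.mem_insert.1 ha with rfl | ha
    · exact hv.2 b hab
    · rcases Finset.mem_insert.1 hb with rfl | hb
      · exact hv.2 a hab.symm
      · exact hS.1 a ha b hb hab
  have := stable_card_le hstable
  rw [Finset.card_insert_of_notMem hvS, hS.2] at this
  omega

section Partition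

variable {A : Finset V} (hcross : ∀ a b, G.Adj a b → (a ∈ A ↔ b ∉ A))

include hcross

lemma nbhd_subset_compl {X : Finset V} (hX : X ⊆ A) : nbhd G X ⊆ Aᶜ := by
  intro v hv
  obtain ⟨a, ha, hadj⟩ := mem_nbhd'.1 hv
  rw [Finset.mem_compl]
  exact (hcross a v hadj).1 (hX ha)

lemma g_le_alpha {X : Finset V} (hX : X ⊆ A) :
    X.card + (Aᶜ \ nbhd G X).card ≤ alpha G := by
  have hdisj : Disjoint X (Aᶜ \ nbhd G X) := by
    refine Finset.disjoint_left.2 fun x hx hx' => ?_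
    exact (Finset.mem_compl.1 (Finset.mem_sdiff.1 hx').1) (hX hx)
  have hstable : stable G (X ∪ (Aᶜ \ nbhd G X)) := by
    intro a ha b hb hab
    rcases Finset.mem_union.1 ha with ha | ha
    · rcases Finset.mem_union.1 hb with hb | hb
      · exact ((hcross a b hab).1 (hX ha)) (hX hb)
      · exact (Finset.mem_sdiff.1 hb).2 (mem_nbhd'.2 ⟨a, ha, hab⟩)
    · rcases Finset.mem_union.1 hb with hb | hb
      · exact (Finset.mem_sdiff.1 ha).2 (mem_nbhd'.2 ⟨b, hb, hab.symm⟩)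
      · exact (Finset.mem_compl.1 (Finset.mem_sdiff.1 ha).1)
          ((hcross a b hab).2 (Finset.mem_compl.1 (Finset.mem_sdiff.1 hb).1))
  have := stable_card_le hstable
  rwa [Finset.card_union_of_disjoint hdisj] at this

lemma card_le_g {S : Finset V} (hS : stable G S) :
    S.card ≤ (S ∩ A).card + (Aᶜ \ nbhd G (S ∩ A)).card := by
  have hsub : S \ A ⊆ Aᶜ \ nbhd G (S ∩ A) := by
    intro v hv
    rw [Finset.mem_sdiff] at hv ⊢
    refine ⟨Finset.mem_compl.2 hv.2, fun hvn => ?_⟩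
    obtain ⟨a, ha, hadj⟩ := mem_nbhd'.1 hvn
    exact hS a (Finset.mem_inter.1 ha).1 v hv.1 hadj
  have h1 : (S ∩ A).card + (S \ A).card = S.card := Finset.card_inter_add_card_sdiff S A
  have h2 : (S \ A).card ≤ (Aᶜ \ nbhd G (S ∩ A)).card := Finset.card_le_card hsub
  omega

lemma maximizer_of_maxStable {S : Finset V} (hS : maxStable G S) :
    (S ∩ A).card + (Aᶜ \ nbhd G (S ∩ A)).card = alpha G := by
  have h1 := card_le_g hcross hS.1
  have h2 := g_le_alpha (X := S ∩ A) hcross Finset.inter_subset_right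
  have h3 := hS.2
  omega

lemma maximizer_inter {X Y : Finset V} (hX : X ⊆ A) (hY : Y ⊆ A)
    (hgX : X.card + (Aᶜ \ nbhd G X).card = alpha G)
    (hgY : Y.card + (Aᶜ \ nbhd G Y).card = alpha G) :
    (X ∩ Y).card + (Aᶜ \ nbhd G (X ∩ Y)).card = alpha G := by
  have hunion : nbhd G (X ∪ Y) = nbhd G X ∪ nbhd G Y := by
    ext v
    simp only [mem_nbhd', Finset.mem_union]
    constructor
    · rintro ⟨a, ha | ha, hadj⟩
      · exact Or.inl ⟨a, ha, hadj⟩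
      · exact Or.inr ⟨a, ha, hadj⟩
    · rintro (⟨a, ha, hadj⟩ | ⟨a, ha, hadj⟩)
      · exact ⟨a, Or.inl ha, hadj⟩
      · exact ⟨a, Or.inr ha, hadj⟩
  have hinter : nbhd G (X ∩ Y) ⊆ nbhd G X ∩ nbhd G Y := by
    intro v hv
    obtain ⟨a, ha, hadj⟩ := mem_nbhd'.1 hv
    rw [Finset.mem_inter] at ha
    exact Finset.mem_inter.2 ⟨mem_nbhd'.2 ⟨a, ha.1, hadj⟩, mem_nbhd'.2 ⟨a, ha.2, hadj⟩⟩
  set P := Aᶜ \ nbhd G X with hP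
  set Q := Aᶜ \ nbhd G Y with hQ
  have e1 : Aᶜ \ nbhd G (X ∪ Y) = P ∩ Q := by
    rw [hunion]; ext v; simp only [Finset.mem_sdiff, Finset.mem_inter,
      Finset.mem_union, hP, hQ]; tauto
  have e2 : P ∪ Q ⊆ Aᶜ \ nbhd G (X ∩ Y) := by
    intro v hv
    rcases Finset.mem_union.1 hv with hv | hv <;>
    · rw [Finset.mem_sdiff] at hv ⊢
      refine ⟨hv.1, fun h => hv.2 ?_⟩
      have := hinter h
      rw [Finset.mem_inter] at this
      first
        | exact this.1
        | exact this.2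
  have c1 : (X ∪ Y).card + (X ∩ Y).card = X.card + Y.card :=
    Finset.card_union_add_card_inter X Y
  have c2 : P.card + Q.card = (P ∪ Q).card + (P ∩ Q).card :=
    (Finset.card_union_add_card_inter P Q).symm
  have c3 : (P ∪ Q).card ≤ (Aᶜ \ nbhd G (X ∩ Y)).card := Finset.card_le_card e2
  have h4 : (X ∪ Y).card + (Aᶜ \ nbhd G (X ∪ Y)).card ≤ alpha G :=
    g_le_alpha hcross (Finset.union_subset hX hY)
  have h5 : (X ∩ Y).card + (Aᶜ \ nbhd G (X ∩ Y)).card ≤ alpha G :=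
    g_le_alpha hcross (fun v hv => hX (Finset.mem_inter.1 hv).1)
  rw [e1] at h4
  omega

lemma core_two (hiso : isol G = ∅) (hA : Aᶜ.card < alpha G) :
    2 ≤ (core G).card := by
  classical
  set F : Finset (Finset V) :=
    Finset.univ.filter (fun X => X ⊆ A ∧ X.card + (Aᶜ \ nbhd G X).card = alpha G) with hF
  have hmemF : ∀ X : Finset V, X ∈ F ↔ X ⊆ A ∧ X.card + (Aᶜ \ nbhd G X).card = alpha G := by
    intro X; simp [hF]
  have hFne : F.Nonempty := by
    obtain ⟨S, hS⟩ := exists_maxStable G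
    exact ⟨S ∩ A, (hmemF _).2 ⟨Finset.inter_subset_right,
      maximizer_of_maxStable hcross hS⟩⟩
  obtain ⟨X0, hX0F, hX0min⟩ := F.exists_min_image Finset.card hFne
  obtain ⟨hX0A, hgX0⟩ := (hmemF X0).1 hX0F
  -- X0 is contained in every maximizer
  have hX0sub : ∀ Y ∈ F, X0 ⊆ Y := by
    intro Y hY
    obtain ⟨hYA, hgY⟩ := (hmemF Y).1 hY
    have hXY : X0 ∩ Y ∈ F := (hmemF _).2 ⟨fun v hv => hX0A (Finset.mem_inter.1 hv).1,
      maximizer_inter hcross hX0A hYA hgX0 hgY⟩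
    have h1 := hX0min _ hXY
    have h2 : X0 ∩ Y = X0 :=
      Finset.eq_of_subset_of_card_le Finset.inter_subset_left h1
    intro v hv
    rw [← h2] at hv
    exact (Finset.mem_inter.1 hv).2
  -- X0 ⊆ core
  have hX0core : X0 ⊆ core G := by
    intro v hv
    rw [core, Finset.mem_filter]
    refine ⟨Finset.mem_univ v, fun S hS => ?_⟩
    have : S ∩ A ∈ F := (hmemF _).2 ⟨Finset.inter_subset_right,
      maximizer_of_maxStable hcross hS⟩
    exact (Finset.mem_inter.1 (hX0sub _ this hv)).1
  -- size bound
  have hnsub : nbhd G X0 ⊆ Aᶜ := nbhd_subset_compl hcross hX0A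
  have hcardsd : (Aᶜ \ nbhd G X0).card = Aᶜ.card - (nbhd G X0).card :=
    Finset.card_sdiff_of_subset hnsub
  have hnle : (nbhd G X0).card ≤ Aᶜ.card := Finset.card_le_card hnsub
  have hX0card : (nbhd G X0).card + 1 ≤ X0.card := by omega
  by_cases hnb : (nbhd G X0).Nonempty
  · have : 2 ≤ X0.card := by
      have := Finset.card_pos.2 hnb
      omega
    calc 2 ≤ X0.card := this
      _ ≤ (core G).card := Finset.card_le_card hX0core
  · rw [Finset.not_nonempty_iff_eq_empty] at hnb
    exfalso
    have hX0ne : X0.Nonempty := Finset.card_pos.1 (by omega)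
    obtain ⟨x, hx⟩ := hX0ne
    have hxiso : x ∈ isol G := by
      rw [isol, Finset.mem_filter]
      refine ⟨Finset.mem_univ x, fun w hw => ?_⟩
      have : w ∈ nbhd G X0 := mem_nbhd'.2 ⟨x, hx, hw⟩
      rw [hnb] at this
      exact absurd this (Finset.notMem_empty w)
    rw [hiso] at hxiso
    exact absurd hxiso (Finset.notMem_empty x)

end Partition

end Aux


theorem stmt19 (G : SimpleGraph V) (hbip : G.Colorable 2)
    (hisol : (isol G).card ≠ 1) :
    Fintype.card V < 2 * alpha G ↔ 2 ≤ (core G).card := by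
  classical
  obtain ⟨C⟩ := hbip
  set A : Finset V := Finset.univ.filter (fun v => C v = 0) with hAdef
  have hmemA : ∀ v, v ∈ A ↔ C v = 0 := by intro v; simp [hAdef]
  have hfin : ∀ x y : Fin 2, x ≠ y → (x = 0 ↔ ¬ y = 0) := by decide
  have hcross : ∀ a b, G.Adj a b → (a ∈ A ↔ b ∉ A) := by
    intro a b hab
    rw [hmemA, hmemA]
    exact hfin _ _ (C.valid hab)
  have hcross' : ∀ a b, G.Adj a b → (a ∈ Aᶜ ↔ b ∉ Aᶜ) := by
    intro a b hab
    have := hcross a b hab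
    simp only [Finset.mem_compl]
    tauto
  have hstableA : stable G A := by
    intro a ha b hb hab
    exact ((hcross a b hab).1 ha) hb
  have hstableAc : stable G Aᶜ := by
    intro a ha b hb hab
    rw [Finset.mem_compl] at ha hb
    exact ha ((hcross a b hab).2 hb)
  have hAle : A.card ≤ alpha G := stable_card_le hstableA
  have hAcle : Aᶜ.card ≤ alpha G := stable_card_le hstableAc
  have hsum : A.card + Aᶜ.card = Fintype.card V := Finset.card_add_card_compl A
  constructor
  · intro hlt
    rcases Nat.lt_or_ge (isol G).card 2 with hlt2 | hge2
    · -- isol G is empty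
      have hiso : isol G = ∅ := Finset.card_eq_zero.1 (by omega)
      rcases Nat.lt_or_ge Aᶜ.card (alpha G) with h | h
      · exact core_two hcross hiso h
      · have hAlt : Aᶜᶜ.card < alpha G := by
          rw [compl_compl]; omega
        exact core_two hcross' hiso hAlt
    · calc 2 ≤ (isol G).card := hge2
        _ ≤ (core G).card := Finset.card_le_card isol_subset_core
  · intro hcore
    by_contra hn
    push_neg at hn
    have hAcard : A.card = alpha G := by omega
    have hAccard : Aᶜ.card = alpha G := by omega
    have hcoreA : core G ⊆ A := by
      intro v hv
      rw [core, Finset.mem_filter] at hv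
      exact hv.2 A ⟨hstableA, hAcard⟩
    have hcoreAc : core G ⊆ Aᶜ := by
      intro v hv
      rw [core, Finset.mem_filter] at hv
      exact hv.2 Aᶜ ⟨hstableAc, hAccard⟩
    have : core G = ∅ := by
      rw [Finset.eq_empty_iff_forall_notMem]
      intro v hv
      exact (Finset.mem_compl.1 (hcoreAc hv)) (hcoreA hv)
    rw [this] at hcore
    simp at hcore
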